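/- Let G be a group and H a collection of subgroups of G. Then the breadth of H equals the independence dimension of H. -/

import Mathlib

private lemma atom_nonempty {G : Type*} [Group G] {n : ℕ} (H : Fin n → Subgroup G)
    (x : Fin n → G) (hx : ∀ i j, j ≠ i → x i ∈ H j) (hx' : ∀ i, x i ∉ H i)
    (I : Finset (Fin n)) :
    (⋂ i, if i ∈ I then (H i : Set G) else ((H i : Set G))ᶜ).Nonempty := by
  classical
  set l : List (Fin n) := (List.finRange n).filter (fun i => i ∉ I) with hl
  have hlmem : ∀ i, i ∈ l ↔ i ∉ I := by
    intro i
    simp [hl, List.mem_filter, List.mem_finRange]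
  have hnd : l.Nodup := (List.nodup_finRange n).filter _
  refine ⟨(l.map x).prod, ?_⟩
  rw [Set.mem_iInter]
  intro j
  by_cases hj : j ∈ I
  · simp only [hj, if_pos, SetLike.mem_coe]
    refine Subgroup.list_prod_mem _ ?_
    intro g hg
    obtain ⟨i, hi, rfl⟩ := List.mem_map.1 hg
    have hiI : i ∉ I := (hlmem i).1 hi
    exact hx i j (fun h => hiI (h ▸ hj))
  · simp only [hj, if_neg, Set.mem_compl_iff, SetLike.mem_coe]
    have hjl : j ∈ l := (hlmem j).2 hj
    obtain ⟨l1, l2, hsplit⟩ := List.append_of_mem hjl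
    rw [hsplit] at hnd
    have hnd1 := List.nodup_append.1 hnd
    have hj1 : j ∉ l1 := fun h => hnd1.2.2 j h j List.mem_cons_self rfl
    have hj2 : j ∉ l2 := (List.nodup_cons.1 hnd1.2.1).1
    intro hmem
    rw [hsplit, List.map_append, List.map_cons, List.prod_append, List.prod_cons] at hmem
    have h1 : (l1.map x).prod ∈ H j := by
      refine Subgroup.list_prod_mem _ ?_
      intro g hg
      obtain ⟨i, hi, rfl⟩ := List.mem_map.1 hg
      exact hx i j (fun h => hj1 (h ▸ hi))
    have h2 : (l2.map x).prod ∈ H j := by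
      refine Subgroup.list_prod_mem _ ?_
      intro g hg
      obtain ⟨i, hi, rfl⟩ := List.mem_map.1 hg
      exact hx i j (fun h => hj2 (h ▸ hi))
    have : x j ∈ H j := by
      have := (H j).mul_mem ((H j).mul_mem ((H j).inv_mem h1) hmem) ((H j).inv_mem h2)
      simpa [mul_assoc] using this
    exact hx' j this

/-- Poizat's lemma: for a collection `𝓗` of subgroups of a group `G`, the breadth
of `𝓗` equals its independence dimension.  This is expressed by saying that for
every `d > 0`, `𝓗` has breadth at most `d` if and only if `𝓗` has independence
dimension at most `d` (no independent family of `d+1` subgroups). -/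
theorem stmt2 {G : Type*} [Group G] (𝓗 : Set (Subgroup G)) (d : ℕ) (hd : 0 < d) :
    (∀ (m : ℕ) (A : Fin m → Subgroup G), d < m → (∀ i, A i ∈ 𝓗) →
        (⋂ i, (A i : Set G)).Nonempty →
        ∃ s : Finset (Fin m), s.card = d ∧
          (⋂ i ∈ s, (A i : Set G)) = ⋂ i, (A i : Set G))
    ↔ (∀ A : Fin (d + 1) → Subgroup G, (∀ i, A i ∈ 𝓗) →
        ∃ I : Finset (Fin (d + 1)),
          ¬ (⋂ i, if i ∈ I then (A i : Set G) else ((A i : Set G))ᶜ).Nonempty) := by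
  classical
  constructor
  · intro hB A hA
    obtain ⟨s, hcard, hs⟩ := hB (d + 1) A (lt_add_one d) hA
      ⟨1, Set.mem_iInter.2 fun i => (A i).one_mem⟩
    have hjs : ∃ j, j ∉ s := by
      by_contra h
      push_neg at h
      have : s = Finset.univ := Finset.eq_univ_iff_forall.2 h
      rw [this, Finset.card_univ, Fintype.card_fin] at hcard
      omega
    obtain ⟨j, hj⟩ := hjs
    refine ⟨s, ?_⟩
    rintro ⟨g, hg⟩
    rw [Set.mem_iInter] at hg
    have hg' : g ∈ ⋂ i ∈ s, (A i : Set G) := by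
      rw [Set.mem_iInter₂]
      intro i hi
      have := hg i
      simpa [hi] using this
    rw [hs, Set.mem_iInter] at hg'
    have hgA : g ∈ (A j : Set G) := hg' j
    have := hg j
    rw [if_neg hj] at this
    exact this hgA
  · intro hI m A hm hA _
    have key : ∀ T : Finset (Fin m), (⋂ i ∈ T, (A i : Set G)) = (⋂ i, (A i : Set G)) →
        ∃ T' : Finset (Fin m), T'.card ≤ d ∧
          (⋂ i ∈ T', (A i : Set G)) = ⋂ i, (A i : Set G) := by
      intro T
      induction T using Finset.strongInduction with
      | _ T ih =>
        intro hT
        by_cases hcard : T.card ≤ d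
        · exact ⟨T, hcard, hT⟩
        by_cases hstep : ∃ i ∈ T, (⋂ j ∈ T.erase i, (A j : Set G)) = ⋂ j, (A j : Set G)
        · obtain ⟨i, hi, h⟩ := hstep
          exact ih (T.erase i) (Finset.erase_ssubset hi) h
        push_neg at hstep
        exfalso
        have hwit : ∀ i ∈ T, ∃ x, (∀ j ∈ T, j ≠ i → x ∈ A j) ∧ x ∉ A i := by
          intro i hi
          by_contra h
          push_neg at h
          apply hstep i hi
          apply subset_antisymm
          · intro g hg
            rw [Set.mem_iInter₂] at hg
            rw [← hT, Set.mem_iInter₂]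
            intro j hj
            by_cases hji : j = i
            · subst hji
              exact h g (fun k hk hki => hg k (Finset.mem_erase.2 ⟨hki, hk⟩))
            · exact hg j (Finset.mem_erase.2 ⟨hji, hj⟩)
          · rw [← hT]
            exact Set.biInter_subset_biInter_left (Finset.erase_subset i T)
        choose! x hx hx' using hwit
        obtain ⟨S, hST, hScard⟩ := Finset.exists_subset_card_eq (s := T) (n := d + 1) (by omega)
        let e : Fin (d + 1) → Fin m := fun i => (S.orderIsoOfFin hScard i : Fin m)
        have heS : ∀ i, e i ∈ T := fun i => hST (S.orderIsoOfFin hScard i).2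
        have heinj : Function.Injective e :=
          Subtype.coe_injective.comp (S.orderIsoOfFin hScard).injective
        obtain ⟨I, hIe⟩ := hI (fun i => A (e i)) (fun i => hA (e i))
        exact hIe (atom_nonempty (fun i => A (e i)) (fun i => x (e i))
          (fun i j hji => hx (e i) (heS i) (e j) (heS j)
            (fun h => hji (heinj h)))
          (fun i => hx' (e i) (heS i)) I)
    obtain ⟨T', hT'card, hT'⟩ := key Finset.univ (by simp)
    obtain ⟨s, hsub, _, hscard⟩ := Finset.exists_subsuperset_card_eq
      (Finset.subset_univ T') hT'card (by simp; omega)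
    refine ⟨s, hscard, subset_antisymm ?_ ?_⟩
    · calc (⋂ i ∈ s, (A i : Set G)) ⊆ ⋂ i ∈ T', (A i : Set G) :=
            Set.biInter_subset_biInter_left hsub
        _ = ⋂ i, (A i : Set G) := hT'
    · intro g hg
      exact Set.mem_iInter₂.2 fun i _ => Set.mem_iInter.1 hg i
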